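/- Let (G,P) be a quasi-lattice ordered group with finite set S of minimal elements of P \ {e}. Then the vacuum projection admits the clique expansion Q_e = ∑_{F ∈ cl(S)} (−1)^{|F|} L_{∨F} L_{∨F}*, where cl(S) is the set of subsets F of S admitting a least upper bound ∨F (with ∨∅ = e), and the sum is over all cliques. -/

import Mathlib

open scoped Classical

lemma coord_eq_inner {P : Type*} [DecidableEq P] (f : lp (fun _ : P => ℂ) 2) (y : P) :
    f y = inner ℂ (lp.single 2 y (1:ℂ)) f := by
  rw [lp.inner_single_left]
  simp [inner]

lemma adj_single {P : Type*} [DecidableEq P]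
    (L : lp (fun _ : P => ℂ) 2 →L[ℂ] lp (fun _ : P => ℂ) 2)
    (g : P → P) (hL : ∀ y : P, L (lp.single 2 y 1) = lp.single 2 (g y) 1)
    (hg : Function.Injective g) (x : P) :
    (ContinuousLinearMap.adjoint L) (lp.single 2 x 1) =
      if h : ∃ y : P, g y = x then lp.single 2 h.choose (1:ℂ) else 0 := by
  apply lp.ext
  funext y
  have lhs : ((ContinuousLinearMap.adjoint L) (lp.single 2 x (1:ℂ))) y
      = (if g y = x then (1:ℂ) else 0) := by
    rw [coord_eq_inner, ContinuousLinearMap.adjoint_inner_right, hL,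
      lp.inner_single_left]
    by_cases h : g y = x
    · subst h
      simp [lp.single_apply_self, inner]
    · rw [lp.single_apply_ne 2 x 1 h]
      simp [inner, h]
  rw [lhs]
  split_ifs with hgy hex hex
  · have hc := hex.choose_spec
    have h2 : y = hex.choose := hg (hgy.trans hc.symm)
    subst h2
    rw [lp.single_apply_self]
  · exact absurd ⟨y, hgy⟩ hex
  · have hc := hex.choose_spec
    rw [lp.single_apply_ne]
    intro h2
    exact hgy (h2 ▸ hc)
  · simp

set_option maxHeartbeats 1000000 in
/-- clique expansion of the vacuum projection. With `S` the finite set of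
minimal elements of `P \ {e}` and `j F = ∨F` the least upper bound of a clique `F`
(`j ∅ = e`), the projection `Q_e` onto `ℂ ε_e` equals
`∑_{F ∈ cl(S)} (−1)^{|F|} L_{∨F} L_{∨F}*`; equivalently this sum sends `ε_x` to itself
if `x = e` and to `0` otherwise. -/
theorem stmt14 {G : Type*} [Group G] [DecidableEq G] (P : Submonoid G)
    (hP : ∀ g : G, g ∈ P → g⁻¹ ∈ P → g = 1)
    (hQL : ∀ x y : G, (∃ u, x⁻¹ * u ∈ P ∧ y⁻¹ * u ∈ P) →
      ∃ m, (x⁻¹ * m ∈ P ∧ y⁻¹ * m ∈ P) ∧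
        ∀ u, x⁻¹ * u ∈ P → y⁻¹ * u ∈ P → m⁻¹ * u ∈ P)
    (L : P → lp (fun _ : P => ℂ) 2 →L[ℂ] lp (fun _ : P => ℂ) 2)
    (hL : ∀ p x : P, L p (lp.single 2 x 1) = lp.single 2 (p * x) 1)
    (S : Finset P) (hS1 : ∀ s ∈ S, s ≠ 1)
    (hmin : ∀ p : P, p ≠ 1 → ∃ s ∈ S, ∃ r : P, s * r = p)
    (hminimal : ∀ s ∈ S, ∀ p : P, p ≠ 1 → (∃ r : P, p * r = s) → p = s)
    (j : Finset P → P) (hj1 : j ∅ = 1)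
    (hj : ∀ F ⊆ S, F.Nonempty → (∃ u : G, ∀ s ∈ F, (s : G)⁻¹ * u ∈ P) →
      (∀ s ∈ F, (s : G)⁻¹ * (j F : G) ∈ P) ∧
        ∀ u : G, (∀ s ∈ F, (s : G)⁻¹ * u ∈ P) → (j F : G)⁻¹ * u ∈ P) :
    ∀ x : P,
      (∑ F ∈ S.powerset,
        if F = ∅ ∨ ∃ u : G, ∀ s ∈ F, (s : G)⁻¹ * u ∈ P then
          ((-1 : ℂ) ^ F.card) •
            (L (j F) * ContinuousLinearMap.adjoint (L (j F)))
        else 0) (lp.single 2 x 1) =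
      if x = 1 then lp.single 2 x (1 : ℂ) else 0 := by
  intro x
  have hinj : ∀ q : P, Function.Injective (fun y : P => q * y) := by
    intro q a b hab
    apply Subtype.ext
    have : (q : G) * a = (q : G) * b := by
      exact_mod_cast congrArg (fun z : P => (z : G)) hab
    exact mul_left_cancel this
  have hproj : ∀ q : P, (L q * ContinuousLinearMap.adjoint (L q)) (lp.single 2 x 1)
      = if ∃ y : P, q * y = x then lp.single 2 x (1:ℂ) else 0 := by
    intro q
    rw [ContinuousLinearMap.mul_apply,
      adj_single (L q) (fun y => q * y) (fun y => hL q y) (hinj q) x]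
    by_cases h : ∃ y : P, q * y = x
    · rw [dif_pos h, if_pos h, hL, h.choose_spec]
    · rw [dif_neg h, if_neg h, map_zero]
  set T : Finset P := S.filter (fun s => ∃ r : P, s * r = x) with hT
  have key : ∀ F ∈ S.powerset,
      (if F = ∅ ∨ ∃ u : G, ∀ s ∈ F, (s : G)⁻¹ * u ∈ P then
          ((-1 : ℂ) ^ F.card) •
            (L (j F) * ContinuousLinearMap.adjoint (L (j F)))
        else 0) (lp.single 2 x 1)
      = (if F ∈ T.powerset then ((-1 : ℂ) ^ F.card) else 0) • lp.single 2 x (1:ℂ) := by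
    intro F hFS
    rw [Finset.mem_powerset] at hFS
    by_cases hFT : F ∈ T.powerset
    · rw [if_pos hFT]
      rw [Finset.mem_powerset] at hFT
      have hub : ∀ s ∈ F, (s : G)⁻¹ * (x : G) ∈ P := by
        intro s hs
        have hsT := hFT hs
        rw [hT, Finset.mem_filter] at hsT
        obtain ⟨r, hr⟩ := hsT.2
        have h3 : (s : G) * r = x := by
          exact_mod_cast congrArg (fun z : P => (z : G)) hr
        have : (s : G)⁻¹ * (x : G) = r := by rw [← h3]; group
        rw [this]; exact r.2
      have hcond : F = ∅ ∨ ∃ u : G, ∀ s ∈ F, (s : G)⁻¹ * u ∈ P := by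
        rcases Finset.eq_empty_or_nonempty F with hF | hF
        · exact Or.inl hF
        · exact Or.inr ⟨(x : G), hub⟩
      rw [if_pos hcond, ContinuousLinearMap.smul_apply, hproj]
      have hle : ∃ y : P, j F * y = x := by
        rcases Finset.eq_empty_or_nonempty F with hF | hF
        · exact ⟨x, by rw [hF, hj1, one_mul]⟩
        · have h2 := (hj F (hFT.trans (Finset.filter_subset _ S)) hF ⟨(x:G), hub⟩).2 (x : G) hub
          refine ⟨⟨(j F : G)⁻¹ * x, h2⟩, ?_⟩
          apply Subtype.ext
          simp
      rw [if_pos hle]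
    · rw [if_neg hFT]
      rw [Finset.mem_powerset] at hFT
      by_cases hcond : F = ∅ ∨ ∃ u : G, ∀ s ∈ F, (s : G)⁻¹ * u ∈ P
      · rw [if_pos hcond, ContinuousLinearMap.smul_apply, hproj]
        have hnle : ¬ ∃ y : P, j F * y = x := by
          intro ⟨y, hy⟩
          rcases Finset.eq_empty_or_nonempty F with hFe | hFne
          · exact hFT (by simp [hFe])
          · rcases hcond with hF | hF
            · exact hFT (by simp [hF])
            · apply hFT
              intro s hs
              have h1 := (hj F hFS hFne hF).1 s hs
              rw [hT, Finset.mem_filter]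
              refine ⟨hFS hs, ?_⟩
              have hy' : (j F : G) * y = x := by
                exact_mod_cast congrArg (fun z : P => (z : G)) hy
              have hmem : (s : G)⁻¹ * (x : G) ∈ P := by
                rw [← hy', ← mul_assoc]
                exact P.mul_mem h1 y.2
              refine ⟨⟨(s : G)⁻¹ * x, hmem⟩, ?_⟩
              apply Subtype.ext
              simp
        rw [if_neg hnle, smul_zero, zero_smul]
      · rw [if_neg hcond, zero_smul]
        rfl
  rw [ContinuousLinearMap.sum_apply, Finset.sum_congr rfl key, ← Finset.sum_smul]
  have hscal : (∑ F ∈ S.powerset, if F ∈ T.powerset then ((-1 : ℂ) ^ F.card) else 0)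
      = if T = ∅ then 1 else 0 := by
    rw [Finset.sum_ite_mem, Finset.inter_eq_right.mpr
      (Finset.powerset_mono.mpr (Finset.filter_subset _ S))]
    have h1 : ∑ m ∈ T.powerset, (-1 : ℂ) ^ m.card
        = ((∑ m ∈ T.powerset, (-1 : ℤ) ^ m.card : ℤ) : ℂ) := by
      push_cast
      rfl
    rw [h1, Finset.sum_powerset_neg_one_pow_card]
    split_ifs <;> simp
  rw [hscal]
  by_cases hx : x = 1
  · have hTe : T = ∅ := by
      rw [hT, Finset.filter_eq_empty_iff]
      intro s hs ⟨r, hr⟩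
      apply hS1 s hs
      apply Subtype.ext
      apply hP s s.2
      have h3 : (s : G) * r = x := by
        exact_mod_cast congrArg (fun z : P => (z : G)) hr
      rw [hx] at h3
      have h4 : (s : G)⁻¹ = r := inv_eq_of_mul_eq_one_right (by exact_mod_cast h3)
      rw [h4]; exact r.2
    rw [if_pos hTe, if_pos hx, one_smul]
  · have hTne : T ≠ ∅ := by
      obtain ⟨s, hs, hr⟩ := hmin x hx
      intro hTe
      have hsT : s ∈ T := by rw [hT, Finset.mem_filter]; exact ⟨hs, hr⟩
      rw [hTe] at hsT
      exact absurd hsT (Finset.notMem_empty s)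
    rw [if_neg hTne, if_neg hx, zero_smul]
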